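/- Let F = [[A, B*], [B, C]] be a bounded self-adjoint block operator on H = H₁ ⊕ H₂ with H₁ finite-dimensional, and suppose ε ≥ 2‖B‖² and ‖C − I‖ < 1/2. Then ind A ≤ ind F ≤ ind (A − ε·I). -/

import Mathlib

open MeasureTheory ContinuousLinearMap
open scoped RealInnerProductSpace

/-- The negative index of inertia. -/
noncomputable def negInd {H : Type*} [NormedAddCommGroup H] [InnerProductSpace ℝ H]
    (F : H →L[ℝ] H) : ℕ∞ :=
  ⨆ (M : Submodule ℝ H) (_ : FiniteDimensional ℝ M)
    (_ : ∃ ε > 0, ∀ x ∈ M, ⟪F x, x⟫ ≤ -ε * ‖x‖ ^ 2), (Module.finrank ℝ M : ℕ∞)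

set_option maxHeartbeats 1000000 in
/-- For a bounded self-adjoint block operator `F = [[A, B*], [B, C]]` on
`H = H₁ ⊕ H₂` with `H₁` finite-dimensional, if `ε ≥ 2‖B‖²` and `‖C − I‖ < 1/2`,
then `ind A ≤ ind F ≤ ind (A − ε·I)`. -/
theorem stmt12 {H₁ H₂ : Type*} [NormedAddCommGroup H₁] [InnerProductSpace ℝ H₁]
    [FiniteDimensional ℝ H₁]
    [NormedAddCommGroup H₂] [InnerProductSpace ℝ H₂] [CompleteSpace H₂]
    (F : WithLp 2 (H₁ × H₂) →L[ℝ] WithLp 2 (H₁ × H₂))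
    (hFsym : ∀ u v, ⟪F u, v⟫ = ⟪u, F v⟫)
    (A : H₁ →L[ℝ] H₁) (B : H₁ →L[ℝ] H₂) (C : H₂ →L[ℝ] H₂)
    (hAsym : ∀ u v, ⟪A u, v⟫ = ⟪u, A v⟫) (hCsym : ∀ u v, ⟪C u, v⟫ = ⟪u, C v⟫)
    (hblock : ∀ x y, F ((WithLp.equiv 2 (H₁ × H₂)).symm (x, y)) =
      (WithLp.equiv 2 (H₁ × H₂)).symm (A x + adjoint B y, B x + C y))
    (ε : ℝ) (hε : 2 * ‖B‖ ^ 2 ≤ ε) (hC : ‖C - 1‖ < 1 / 2) :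
    negInd A ≤ negInd F ∧ negInd F ≤ negInd (A - ε • (1 : H₁ →L[ℝ] H₁)) := by
  classical
  -- inner product of F on a block vector
  have key : ∀ (x : H₁) (y : H₂),
      ⟪F ((WithLp.equiv 2 (H₁ × H₂)).symm (x, y)), (WithLp.equiv 2 (H₁ × H₂)).symm (x, y)⟫
        = ⟪A x, x⟫ + 2 * ⟪B x, y⟫ + ⟪C y, y⟫ := by
    intro x y
    rw [hblock]
    simp only [WithLp.prod_inner_apply, WithLp.equiv_symm_apply, WithLp.ofLp_toLp,
      inner_add_left, ContinuousLinearMap.adjoint_inner_left]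
    rw [real_inner_comm y (B x)]
    ring
  have normsq : ∀ (x : H₁) (y : H₂),
      ‖(WithLp.equiv 2 (H₁ × H₂)).symm (x, y)‖ ^ 2 = ‖x‖ ^ 2 + ‖y‖ ^ 2 := by
    intro x y
    rw [WithLp.prod_norm_sq_eq_of_L2]
    simp
  have hCpos : ∀ y : H₂, (1 / 2 : ℝ) * ‖y‖ ^ 2 ≤ ⟪C y, y⟫ := by
    intro y
    have h1 : ⟪C y, y⟫ = ‖y‖ ^ 2 + ⟪(C - 1) y, y⟫ := by
      simp only [ContinuousLinearMap.sub_apply, ContinuousLinearMap.one_apply, inner_sub_left,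
        real_inner_self_eq_norm_sq]
      ring
    have h2 : |⟪(C - 1) y, y⟫| ≤ ‖C - 1‖ * ‖y‖ * ‖y‖ := by
      calc |⟪(C - 1) y, y⟫| ≤ ‖(C - 1) y‖ * ‖y‖ := abs_real_inner_le_norm _ _
        _ ≤ ‖C - 1‖ * ‖y‖ * ‖y‖ := by
            have := (C - 1).le_opNorm y
            nlinarith [norm_nonneg y]
    have h3 : -((1/2 : ℝ) * ‖y‖ ^ 2) ≤ ⟪(C - 1) y, y⟫ := by
      have := abs_le.mp h2
      nlinarith [norm_nonneg y, sq_nonneg ‖y‖, hC.le]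
    nlinarith
  constructor
  · -- negInd A ≤ negInd F
    refine iSup_le fun M => iSup_le fun hM => iSup_le fun hprop => ?_
    obtain ⟨δ, hδ, hMneg⟩ := hprop
    set ι : H₁ →ₗ[ℝ] WithLp 2 (H₁ × H₂) :=
      (WithLp.linearEquiv 2 ℝ (H₁ × H₂)).symm.toLinearMap ∘ₗ LinearMap.inl ℝ H₁ H₂ with hι
    have hιx : ∀ x : H₁, ι x = (WithLp.equiv 2 (H₁ × H₂)).symm (x, 0) := fun x => rfl
    have hinj : Function.Injective ι :=
      (WithLp.linearEquiv 2 ℝ (H₁ × H₂)).symm.injective.comp LinearMap.inl_injective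
    set N : Submodule ℝ (WithLp 2 (H₁ × H₂)) := M.map ι with hN
    haveI : FiniteDimensional ℝ N := Module.Finite.map M ι
    have hrank : Module.finrank ℝ M = Module.finrank ℝ N :=
      (Submodule.equivMapOfInjective ι hinj M).finrank_eq
    have hprop : ∃ δ' > 0, ∀ u ∈ N, ⟪F u, u⟫ ≤ -δ' * ‖u‖ ^ 2 := by
      refine ⟨δ, hδ, ?_⟩
      rintro u ⟨x, hx, rfl⟩
      rw [hιx]
      rw [key x 0, normsq x 0]
      have := hMneg x hx
      simp only [inner_zero_right, norm_zero]
      nlinarith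
    calc (Module.finrank ℝ M : ℕ∞) = (Module.finrank ℝ N : ℕ∞) := by exact_mod_cast hrank
      _ ≤ negInd F := le_iSup_of_le N <| le_iSup_of_le ‹_› <| le_iSup_of_le hprop le_rfl
  · -- negInd F ≤ negInd (A - ε • 1)
    refine iSup_le fun M => iSup_le fun hM => iSup_le fun hprop => ?_
    obtain ⟨δ, hδ, hMneg⟩ := hprop
    set π : WithLp 2 (H₁ × H₂) →ₗ[ℝ] H₁ :=
      (LinearMap.fst ℝ H₁ H₂) ∘ₗ (WithLp.linearEquiv 2 ℝ (H₁ × H₂)).toLinearMap with hπ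
    have hπu : ∀ u : WithLp 2 (H₁ × H₂), π u = ((WithLp.equiv 2 (H₁ × H₂)) u).1 := fun u => rfl
    have hu_eq : ∀ u : WithLp 2 (H₁ × H₂),
        u = (WithLp.equiv 2 (H₁ × H₂)).symm ((WithLp.equiv 2 (H₁ × H₂)) u) := fun u => rfl
    set f : M →ₗ[ℝ] H₁ := π.domRestrict M with hf
    have hfinj : Function.Injective f := by
      rw [← LinearMap.ker_eq_bot, LinearMap.ker_eq_bot']
      rintro ⟨u, hu⟩ h0
      have hx0 : ((WithLp.equiv 2 (H₁ × H₂)) u).1 = 0 := h0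
      have hurep : u = (WithLp.equiv 2 (H₁ × H₂)).symm (0, ((WithLp.equiv 2 (H₁ × H₂)) u).2) := by
        conv_lhs => rw [hu_eq u]
        exact congrArg _ (Prod.ext hx0 rfl)
      generalize hy : ((WithLp.equiv 2 (H₁ × H₂)) u).2 = y at hurep
      have h1 := hMneg u hu
      rw [hurep, key 0 y, normsq 0 y] at h1
      have h2 := hCpos y
      simp only [map_zero, inner_zero_left, inner_zero_right, norm_zero] at h1
      have hy0 : ‖y‖ ^ 2 = 0 := by nlinarith [sq_nonneg ‖y‖]
      have hyz : y = 0 := by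
        have := pow_eq_zero_iff (n := 2) (by norm_num) |>.mp hy0
        simpa using this
      apply Subtype.ext
      show u = 0
      rw [hurep, hyz]
      exact map_zero (WithLp.linearEquiv 2 ℝ (H₁ × H₂)).symm
    set N : Submodule ℝ H₁ := M.map π with hN
    haveI : FiniteDimensional ℝ N := Module.Finite.map M π
    have hrank : Module.finrank ℝ M = Module.finrank ℝ N := by
      have e1 := (LinearEquiv.ofInjective f hfinj).finrank_eq
      have e2 : LinearMap.range f = N := by rw [hf, LinearMap.range_domRestrict]
      rw [e1, e2]
    have hprop : ∃ δ' > 0, ∀ x ∈ N, ⟪(A - ε • (1 : H₁ →L[ℝ] H₁)) x, x⟫ ≤ -δ' * ‖x‖ ^ 2 := by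
      refine ⟨δ, hδ, ?_⟩
      rintro x ⟨u, hu, rfl⟩
      rw [hπu]
      set x := ((WithLp.equiv 2 (H₁ × H₂)) u).1
      set y := ((WithLp.equiv 2 (H₁ × H₂)) u).2
      have h1 := hMneg u hu
      rw [hu_eq u] at h1
      rw [key x y, normsq x y] at h1
      have h2 := hCpos y
      have hB : -( ‖B‖ * ‖x‖ * ‖y‖) ≤ ⟪B x, y⟫ := by
        have habs : |⟪B x, y⟫| ≤ ‖B‖ * ‖x‖ * ‖y‖ := by
          calc |⟪B x, y⟫| ≤ ‖B x‖ * ‖y‖ := abs_real_inner_le_norm _ _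
            _ ≤ ‖B‖ * ‖x‖ * ‖y‖ := by
                have := B.le_opNorm x
                nlinarith [norm_nonneg y]
        linarith [(abs_le.mp habs).1]
      have hgoal : ⟪(A - ε • (1 : H₁ →L[ℝ] H₁)) x, x⟫ = ⟪A x, x⟫ - ε * ‖x‖ ^ 2 := by
        simp only [ContinuousLinearMap.sub_apply, ContinuousLinearMap.smul_apply,
          ContinuousLinearMap.one_apply, inner_sub_left, real_inner_smul_left,
          real_inner_self_eq_norm_sq]
      rw [hgoal]
      nlinarith [sq_nonneg (2 * ‖B‖ * ‖x‖ - ‖y‖), sq_nonneg ‖x‖, sq_nonneg ‖y‖,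
        mul_nonneg hδ.le (sq_nonneg ‖y‖),
        mul_nonneg (by linarith : (0:ℝ) ≤ ε - 2 * ‖B‖ ^ 2) (sq_nonneg ‖x‖)]
    calc (Module.finrank ℝ M : ℕ∞) = (Module.finrank ℝ N : ℕ∞) := by exact_mod_cast hrank
      _ ≤ negInd (A - ε • (1 : H₁ →L[ℝ] H₁)) :=
          le_iSup_of_le N <| le_iSup_of_le ‹_› <| le_iSup_of_le hprop le_rfl
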